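/- arXiv:1305.3972 — 2 statements merged into one kernel-verified Lean document; each statement's English description precedes it below -/
import Mathlib

section
/- Let S be a finite set of primes and, for each p ∈ S, let F_p and G_p be polynomials with complex coefficients satisfying F_p(0) = G_p(0) = 1. If there is a real number σ_0 such that ∏_{p ∈ S} F_p(p^{-s}) = ∏_{p ∈ S} G_p(p^{-s}) for all complex s with Re(s) > σ_0, then F_p = G_p for every p ∈ S. Equivalently, if the meromorphic function ∏_{p ∈ S} F_p(p^{-s})/G_p(p^{-s}) is nonvanishing and pole-free on all of ℂ, then F_p = G_p for every p ∈ S. -/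
open Complex Finset

/-- Uniqueness of coefficients of a generalized finite Dirichlet polynomial. -/
lemma dirichlet_unique {ι : Type*} (T : Finset ι) (w : ι → ℕ) (a : ι → ℂ)
    (hw : ∀ i ∈ T, 0 < w i) (hinj : Set.InjOn w T) (σ₀ : ℝ)
    (h : ∀ s : ℝ, σ₀ < s → ∑ i ∈ T, a i * (w i : ℂ) ^ (-(s : ℂ)) = 0) :
    ∀ i ∈ T, a i = 0 := by
  classical
  by_contra hcon
  push_neg at hcon
  obtain ⟨i0, hi0T, hi0⟩ := hcon
  set T' := T.filter (fun i => a i ≠ 0) with hT'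
  have hne : T'.Nonempty := ⟨i0, by simp [hT', hi0T, hi0]⟩
  obtain ⟨m, hmT', hm⟩ := T'.exists_min_image w hne
  have hmT : m ∈ T := (mem_filter.mp hmT').1
  have ham : a m ≠ 0 := (mem_filter.mp hmT').2
  -- the rescaled sums vanish
  have key : ∀ s : ℝ, σ₀ < s →
      ∑ i ∈ T', a i * ((((w m : ℝ) / (w i : ℝ)) ^ s : ℝ) : ℂ) = 0 := by
    intro s hs
    have h0 := h s hs
    have hsub : ∑ i ∈ T', a i * (w i : ℂ) ^ (-(s : ℂ))
        = ∑ i ∈ T, a i * (w i : ℂ) ^ (-(s : ℂ)) := by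
      refine Finset.sum_subset (Finset.filter_subset _ _) ?_
      intro i hi hni
      have : a i = 0 := by
        by_contra hai
        exact hni (mem_filter.mpr ⟨hi, hai⟩)
      simp [this]
    have h1 : ∑ i ∈ T', a i * (w i : ℂ) ^ (-(s : ℂ)) = 0 := by rw [hsub, h0]
    have h2 : (∑ i ∈ T', a i * (w i : ℂ) ^ (-(s : ℂ))) * (((w m : ℝ) ^ s : ℝ) : ℂ) = 0 := by
      rw [h1, zero_mul]
    rw [Finset.sum_mul] at h2
    rw [← h2]
    refine Finset.sum_congr rfl ?_
    intro i hi
    have hwi : (0 : ℝ) < (w i : ℝ) := by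
      exact_mod_cast hw i (mem_filter.mp hi).1
    have hwm : (0 : ℝ) < (w m : ℝ) := by exact_mod_cast hw m hmT
    have hpow : ((w i : ℕ) : ℂ) ^ (-(s : ℂ)) = ((((w i : ℝ)) ^ (-s) : ℝ) : ℂ) := by
      rw [Complex.ofReal_cpow hwi.le]
      norm_cast
    rw [hpow, mul_assoc, ← Complex.ofReal_mul]
    congr 1
    rw [Real.rpow_neg hwi.le, Real.div_rpow hwm.le hwi.le]
    ring_nf
  -- the rescaled sum tends to `a m`
  have htend : Filter.Tendsto
      (fun s : ℝ => ∑ i ∈ T', a i * ((((w m : ℝ) / (w i : ℝ)) ^ s : ℝ) : ℂ))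
      Filter.atTop (nhds (a m)) := by
    have hrw : a m = ∑ i ∈ T', (if i = m then a m else 0) := by
      rw [Finset.sum_ite_eq' T' m (fun _ => a m)]
      simp [hmT']
    rw [hrw]
    refine tendsto_finset_sum _ ?_
    intro i hi
    by_cases him : i = m
    · subst him
      simp only [if_pos rfl]
      have hwi : (0 : ℝ) < (w i : ℝ) := by
        exact_mod_cast hw i (mem_filter.mp hi).1
      have hconst : ∀ s : ℝ, a i * ((((w i : ℝ) / (w i : ℝ)) ^ s : ℝ) : ℂ) = a i := by
        intro s
        rw [div_self hwi.ne', Real.one_rpow]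
        simp
      simp only [hconst]
      exact tendsto_const_nhds
    · simp only [if_neg him]
      have hiT : i ∈ T := (mem_filter.mp hi).1
      have hwi : (0 : ℝ) < (w i : ℝ) := by exact_mod_cast hw i hiT
      have hwm : (0 : ℝ) < (w m : ℝ) := by exact_mod_cast hw m hmT
      have hlt : w m < w i := by
        rcases lt_or_eq_of_le (hm i hi) with h' | h'
        · exact h'
        · exact absurd (hinj hmT hiT h') (Ne.symm him)
      have hratio : (w m : ℝ) / (w i : ℝ) < 1 := by
        rw [div_lt_one hwi]
        exact_mod_cast hlt
      have hratio0 : (0 : ℝ) < (w m : ℝ) / (w i : ℝ) := div_pos hwm hwi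
      have h0 : Filter.Tendsto (fun s : ℝ => ((w m : ℝ) / (w i : ℝ)) ^ s)
          Filter.atTop (nhds 0) :=
        tendsto_rpow_atTop_of_base_lt_one _ (by linarith) hratio
      have h1 : Filter.Tendsto (fun s : ℝ => ((((w m : ℝ) / (w i : ℝ)) ^ s : ℝ) : ℂ))
          Filter.atTop (nhds 0) := by
        have := (Complex.continuous_ofReal.tendsto 0).comp h0
        simpa [Function.comp_def] using this
      have := h1.const_mul (a i)
      simpa using this
  -- conclude `a m = 0`, contradiction
  have hev : (fun s : ℝ => ∑ i ∈ T', a i * ((((w m : ℝ) / (w i : ℝ)) ^ s : ℝ) : ℂ))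
      =ᶠ[Filter.atTop] (fun _ => (0 : ℂ)) := by
    filter_upwards [Filter.eventually_gt_atTop σ₀] with s hs
    exact key s hs
  have : Filter.Tendsto (fun _ : ℝ => (0 : ℂ)) Filter.atTop (nhds (a m)) :=
    htend.congr' hev
  exact ham (tendsto_nhds_unique tendsto_const_nhds this).symm

lemma natCast_pow_cpow (p k : ℕ) (s : ℂ) :
    ((p ^ k : ℕ) : ℂ) ^ s = ((p : ℂ) ^ s) ^ k := by
  rw [Nat.cast_pow, ← Complex.natCast_cpow_natCast_mul, Complex.cpow_nat_mul]

lemma natCast_prod_cpow {ι : Type*} (t : Finset ι) (f : ι → ℕ) (s : ℂ) :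
    ((∏ i ∈ t, f i : ℕ) : ℂ) ^ s = ∏ i ∈ t, ((f i : ℕ) : ℂ) ^ s := by
  classical
  induction t using Finset.induction with
  | empty => simp [Complex.one_cpow]
  | insert _ _ hx ih =>
    rename_i x t
    rw [Finset.prod_insert hx, Finset.prod_insert hx, ← ih, Nat.cast_mul,
      Complex.natCast_mul_natCast_cpow]

/-- The integer attached to an exponent tuple over a finite set of primes. -/
def eulerAux (S : Finset ℕ) (e : (a : ℕ) → a ∈ S → ℕ) : ℕ :=
  ∏ x ∈ S.attach, x.1 ^ (e x.1 x.2)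

lemma eulerAux_pos (S : Finset ℕ) (hS : ∀ p ∈ S, Nat.Prime p)
    (e : (a : ℕ) → a ∈ S → ℕ) : 0 < eulerAux S e :=
  Finset.prod_pos fun x _ => pow_pos (hS x.1 x.2).pos _

lemma eulerAux_factorization (S : Finset ℕ) (hS : ∀ p ∈ S, Nat.Prime p)
    (e : (a : ℕ) → a ∈ S → ℕ) (p : ℕ) (hp : p ∈ S) :
    (eulerAux S e).factorization p = e p hp := by
  classical
  unfold eulerAux
  rw [Nat.factorization_prod (fun x _ => (pow_pos (hS x.1 x.2).pos _).ne')]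
  rw [Finsupp.finset_sum_apply]
  rw [Finset.sum_eq_single_of_mem ⟨p, hp⟩ (Finset.mem_attach _ _)]
  · rw [(hS p hp).factorization_pow, Finsupp.single_apply, if_pos rfl]
  · intro x _ hx
    rw [(hS x.1 x.2).factorization_pow, Finsupp.single_apply, if_neg]
    intro hxp
    exact hx (Subtype.ext hxp)

lemma eulerAux_cpow (S : Finset ℕ) (e : (a : ℕ) → a ∈ S → ℕ) (s : ℂ) :
    ((eulerAux S e : ℕ) : ℂ) ^ s = ∏ x ∈ S.attach, ((x.1 : ℂ) ^ s) ^ (e x.1 x.2) := by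
  unfold eulerAux
  rw [natCast_prod_cpow]
  exact Finset.prod_congr rfl fun x _ => natCast_pow_cpow _ _ _

/-- A finite product of Euler factors determines the factors: if `S` is a finite set of
primes, `F_p, G_p` are polynomials with `F_p(0) = G_p(0) = 1`, and
`∏_{p ∈ S} F_p(p^(-s)) = ∏_{p ∈ S} G_p(p^(-s))` on some right half-plane `Re(s) > σ₀`, then
`F_p = G_p` for every `p ∈ S`.  (The key input is that `{log p : p prime}` is linearly
independent over `ℚ`.) -/
theorem finite_euler_product_determines_factors
    (S : Finset ℕ) (hS : ∀ p ∈ S, Nat.Prime p)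
    (F G : ℕ → Polynomial ℂ)
    (hF0 : ∀ p ∈ S, (F p).eval 0 = 1) (hG0 : ∀ p ∈ S, (G p).eval 0 = 1)
    (σ₀ : ℝ)
    (heq : ∀ s : ℂ, σ₀ < s.re →
      ∏ p ∈ S, (F p).eval ((p : ℂ) ^ (-s)) = ∏ p ∈ S, (G p).eval ((p : ℂ) ^ (-s))) :
    ∀ p ∈ S, F p = G p := by
  classical
  set N : ℕ := S.sup (fun p => max (F p).natDegree (G p).natDegree) + 1 with hN
  have hFd : ∀ p ∈ S, (F p).natDegree < N := fun p hp =>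
    Nat.lt_succ_of_le ((le_max_left _ _).trans
      (Finset.le_sup (f := fun p => max (F p).natDegree (G p).natDegree) hp))
  have hGd : ∀ p ∈ S, (G p).natDegree < N := fun p hp =>
    Nat.lt_succ_of_le ((le_max_right _ _).trans
      (Finset.le_sup (f := fun p => max (F p).natDegree (G p).natDegree) hp))
  -- expand the finite Euler products into generalized Dirichlet polynomials
  have expand : ∀ (P : ℕ → Polynomial ℂ), (∀ p ∈ S, (P p).natDegree < N) → ∀ s : ℂ,
      ∏ p ∈ S, (P p).eval ((p : ℂ) ^ (-s)) = ∑ e ∈ S.pi (fun _ => Finset.range N),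
        (∏ x ∈ S.attach, (P x.1).coeff (e x.1 x.2)) * ((eulerAux S e : ℕ) : ℂ) ^ (-s) := by
    intro P hPd s
    have h1 : ∀ p ∈ S, (P p).eval ((p : ℂ) ^ (-s))
        = ∑ k ∈ Finset.range N, (P p).coeff k * ((p : ℂ) ^ (-s)) ^ k := fun p hp =>
      Polynomial.eval_eq_sum_range' (hPd p hp) _
    rw [Finset.prod_congr rfl h1, Finset.prod_sum]
    refine Finset.sum_congr rfl fun e _ => ?_
    rw [eulerAux_cpow, ← Finset.prod_mul_distrib]
  -- the coefficients agree
  have hzero : ∀ e ∈ S.pi (fun _ => Finset.range N),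
      (∏ x ∈ S.attach, (F x.1).coeff (e x.1 x.2))
        - (∏ x ∈ S.attach, (G x.1).coeff (e x.1 x.2)) = 0 := by
    refine dirichlet_unique _ (eulerAux S) _ (fun e _ => eulerAux_pos S hS e) ?_ σ₀ ?_
    · intro e he f hf hef
      funext p hp
      calc e p hp = (eulerAux S e).factorization p :=
            (eulerAux_factorization S hS e p hp).symm
        _ = (eulerAux S f).factorization p := by rw [hef]
        _ = f p hp := eulerAux_factorization S hS f p hp
    · intro s hs
      have h := heq (s : ℂ) (by simpa using hs)
      rw [expand F hFd, expand G hGd] at h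
      simp only [sub_mul]
      rw [Finset.sum_sub_distrib, h, sub_self]
  -- conclude equality of the polynomials
  intro p hp
  apply Polynomial.ext
  intro k
  by_cases hk : k < N
  · set e : (a : ℕ) → a ∈ S → ℕ := fun q _ => if q = p then k else 0 with he
    have hemem : e ∈ S.pi (fun _ => Finset.range N) := by
      rw [Finset.mem_pi]
      intro q hq
      rw [Finset.mem_range]
      simp only [he]
      split_ifs
      · exact hk
      · omega
    have h := hzero e hemem
    have hFe : ∏ x ∈ S.attach, (F x.1).coeff (e x.1 x.2) = (F p).coeff k := by
      rw [Finset.prod_eq_single_of_mem ⟨p, hp⟩ (Finset.mem_attach _ _)]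
      · simp [he]
      · intro x _ hx
        have hxp : x.1 ≠ p := fun h' => hx (Subtype.ext h')
        simp only [he, if_neg hxp]
        rw [Polynomial.coeff_zero_eq_eval_zero, hF0 x.1 x.2]
    have hGe : ∏ x ∈ S.attach, (G x.1).coeff (e x.1 x.2) = (G p).coeff k := by
      rw [Finset.prod_eq_single_of_mem ⟨p, hp⟩ (Finset.mem_attach _ _)]
      · simp [he]
      · intro x _ hx
        have hxp : x.1 ≠ p := fun h' => hx (Subtype.ext h')
        simp only [he, if_neg hxp]
        rw [Polynomial.coeff_zero_eq_eval_zero, hG0 x.1 x.2]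
    rw [hFe, hGe] at h
    exact sub_eq_zero.mp h
  · push_neg at hk
    rw [Polynomial.coeff_eq_zero_of_natDegree_lt (lt_of_lt_of_le (hFd p hp) hk),
      Polynomial.coeff_eq_zero_of_natDegree_lt (lt_of_lt_of_le (hGd p hp) hk)]
end

section
/- Let μ_{1,1},…,μ_{J_1,1} and μ_{1,2},…,μ_{J_2,2} be complex numbers with real part in {0,1}, and let ν_{1,1},…,ν_{K_1,1} and ν_{1,2},…,ν_{K_2,2} be complex numbers whose real parts are positive integers or positive half-integers. Suppose that the meromorphic function G(s) = [∏_{j=1}^{J_1} Γ_ℝ(s + μ_{j,1}) · ∏_{k=1}^{K_1} Γ_ℂ(s + ν_{k,1})] / [∏_{j=1}^{J_2} Γ_ℝ(s + μ_{j,2}) · ∏_{k=1}^{K_2} Γ_ℂ(s + ν_{k,2})] extends to an entire function on ℂ with no zeros. Then J_1 = J_2, K_1 = K_2, the multiset {μ_{j,1} : 1 ≤ j ≤ J_1} equals the multiset {μ_{j,2} : 1 ≤ j ≤ J_2}, the multiset {ν_{k,1} : 1 ≤ k ≤ K_1} equals the multiset {ν_{k,2} : 1 ≤ k ≤ K_2},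 and consequently G is identically 1. -/
open Complex Finset

noncomputable section

/-- The normalized Gamma factor `Γ_ℝ(s) = π^(-s/2) Γ(s/2)`. -/
def GammaR (s : ℂ) : ℂ := (Real.pi : ℂ) ^ (-s / 2) * Complex.Gamma (s / 2)

/-- The normalized Gamma factor `Γ_ℂ(s) = 2 (2π)^(-s) Γ(s)`. -/
def GammaC (s : ℂ) : ℂ := 2 * (2 * (Real.pi : ℂ)) ^ (-s) * Complex.Gamma s

open scoped Classical

/-! ### Auxiliary lemmas on the Gamma factors -/

lemma pi_ne : (Real.pi : ℂ) ≠ 0 := Complex.ofReal_ne_zero.mpr Real.pi_ne_zero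

lemma two_pi_ne : (2 * (Real.pi : ℂ)) ≠ 0 := mul_ne_zero two_ne_zero pi_ne

lemma GammaR_inv (s : ℂ) : (GammaR s)⁻¹ = (Real.pi : ℂ) ^ (s / 2) * (Complex.Gamma (s / 2))⁻¹ := by
  rw [GammaR, mul_inv]
  congr 1
  rw [show -s/2 = -(s/2) by ring, Complex.cpow_neg, inv_inv]

lemma GammaC_inv (s : ℂ) : (GammaC s)⁻¹ = 2⁻¹ * (2 * (Real.pi : ℂ)) ^ s * (Complex.Gamma s)⁻¹ := by
  rw [GammaC, mul_inv, mul_inv, Complex.cpow_neg, inv_inv]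

lemma GammaR_eq_zero_iff (s : ℂ) : GammaR s = 0 ↔ ∃ n : ℕ, s = -(2 * n) := by
  rw [GammaR, mul_eq_zero]
  constructor
  · rintro (h | h)
    · rw [Complex.cpow_eq_zero_iff] at h
      exact absurd h.1 pi_ne
    · obtain ⟨m, hm⟩ := (Complex.Gamma_eq_zero_iff _).mp h
      refine ⟨m, ?_⟩
      have : s = 2 * (s / 2) := by ring
      rw [this, hm]; ring
  · rintro ⟨n, rfl⟩
    right
    rw [Complex.Gamma_eq_zero_iff]
    exact ⟨n, by ring⟩

lemma GammaC_eq_zero_iff (s : ℂ) : GammaC s = 0 ↔ ∃ n : ℕ, s = -(n : ℂ) := by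
  rw [GammaC, mul_eq_zero, mul_eq_zero]
  simp only [Complex.Gamma_eq_zero_iff]
  constructor
  · rintro ((h | h) | h)
    · norm_num at h
    · rw [Complex.cpow_eq_zero_iff] at h
      exact absurd h.1 two_pi_ne
    · exact h
  · exact fun h => Or.inr h

lemma diff_GammaR_inv (μ : ℂ) : Differentiable ℂ (fun s => (GammaR (s + μ))⁻¹) := by
  have h1 : Differentiable ℂ (fun s : ℂ => (Real.pi : ℂ) ^ ((s + μ) / 2)) := by
    apply Differentiable.const_cpow _ (Or.inl pi_ne)
    exact (differentiable_id.add_const μ).div_const 2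
  have h2 : Differentiable ℂ (fun s : ℂ => (Complex.Gamma ((s + μ) / 2))⁻¹) :=
    Complex.differentiable_one_div_Gamma.comp ((differentiable_id.add_const μ).div_const 2)
  have := h1.mul h2
  have heq : (fun s => (GammaR (s + μ))⁻¹) = ((fun s : ℂ => (Real.pi : ℂ) ^ ((s + μ) / 2)) *
      fun s : ℂ => (Complex.Gamma ((s + μ) / 2))⁻¹) := by
    funext s; exact GammaR_inv _
  rw [heq]; exact this

lemma diff_GammaC_inv (ν : ℂ) : Differentiable ℂ (fun s => (GammaC (s + ν))⁻¹) := by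
  have h1 : Differentiable ℂ (fun s : ℂ => 2⁻¹ * (2 * (Real.pi : ℂ)) ^ (s + ν)) := by
    apply Differentiable.const_mul
    exact Differentiable.const_cpow (differentiable_id.add_const ν) (Or.inl two_pi_ne)
  have h2 : Differentiable ℂ (fun s : ℂ => (Complex.Gamma (s + ν))⁻¹) :=
    Complex.differentiable_one_div_Gamma.comp (differentiable_id.add_const ν)
  have := h1.mul h2
  have heq : (fun s => (GammaC (s + ν))⁻¹) = ((fun s : ℂ => 2⁻¹ * (2 * (Real.pi : ℂ)) ^ (s + ν)) *
      fun s : ℂ => (Complex.Gamma (s + ν))⁻¹) := by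
    funext s; rw [GammaC_inv]; rfl
  rw [heq]; exact this

/-! ### Local factorization of the reciprocal Gamma factors -/

lemma Gamma_inv_prod (s : ℂ) (n : ℕ) :
    (Complex.Gamma s)⁻¹ = (∏ i ∈ Finset.range (n+1), (s + i)) * (Complex.Gamma (s + (n+1)))⁻¹ := by
  induction n with
  | zero => simpa using Complex.one_div_Gamma_eq_self_mul_one_div_Gamma_add_one s
  | succ n ih =>
    have hp : (∏ i ∈ Finset.range (n+1+1), (s + i)) =
        (∏ i ∈ Finset.range (n+1), (s + i)) * (s + (n+1)) := by
      rw [Finset.prod_range_succ]; push_cast; ring_nf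
    rw [hp, ih, Complex.one_div_Gamma_eq_self_mul_one_div_Gamma_add_one (s + (n+1))]
    push_cast
    ring_nf

lemma GRinv_factor (μ z₀ : ℂ) (n : ℕ) (h : z₀ + μ = -(2 * n)) :
    ∃ H : ℂ → ℂ, Differentiable ℂ H ∧ H z₀ ≠ 0 ∧ ∀ s, (GammaR (s + μ))⁻¹ = (s - z₀) * H s := by
  refine ⟨fun s => 2⁻¹ * ((Real.pi : ℂ) ^ ((s + μ) / 2) *
      ((∏ i ∈ Finset.range n, ((s + μ) / 2 + i)) * (Complex.Gamma ((s + μ) / 2 + (n+1)))⁻¹)),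
    ?_, ?_, ?_⟩
  · apply Differentiable.const_mul
    apply Differentiable.mul
    · exact Differentiable.const_cpow ((differentiable_id.add_const μ).div_const 2) (Or.inl pi_ne)
    apply Differentiable.mul
    · apply Differentiable.fun_finsetProd
      intro i _
      exact ((differentiable_id.add_const μ).div_const 2).add_const _
    · exact Complex.differentiable_one_div_Gamma.comp
        (((differentiable_id.add_const μ).div_const 2).add_const _)
  · have hz : (z₀ + μ) / 2 = -(n : ℂ) := by rw [h]; ring
    apply mul_ne_zero (by norm_num)
    apply mul_ne_zero
    · simp only [ne_eq, Complex.cpow_eq_zero_iff, not_and]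
      intro hpi
      exact absurd hpi (by exact_mod_cast pi_ne)
    apply mul_ne_zero
    · rw [Finset.prod_ne_zero_iff]
      intro i hi
      rw [hz]
      have : (i : ℂ) ≠ (n : ℂ) := by
        exact_mod_cast Nat.cast_injective.ne (Finset.mem_range.mp hi).ne
      intro hc
      apply this
      linear_combination hc
    · rw [hz, show -(n:ℂ) + (n+1) = 1 by ring, Complex.Gamma_one]
      norm_num
  · intro s
    rw [GammaR_inv, Gamma_inv_prod _ n, Finset.prod_range_succ]
    have : (s + μ) / 2 + n = (s - z₀) / 2 := by
      have : μ = -(2*n) - z₀ := by linear_combination h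
      rw [this]; ring
    rw [this]
    ring

lemma GCinv_factor (ν z₀ : ℂ) (n : ℕ) (h : z₀ + ν = -(n : ℂ)) :
    ∃ H : ℂ → ℂ, Differentiable ℂ H ∧ H z₀ ≠ 0 ∧ ∀ s, (GammaC (s + ν))⁻¹ = (s - z₀) * H s := by
  refine ⟨fun s => 2⁻¹ * ((2 * (Real.pi : ℂ)) ^ (s + ν) *
      ((∏ i ∈ Finset.range n, (s + ν + i)) * (Complex.Gamma (s + ν + (n+1)))⁻¹)),
    ?_, ?_, ?_⟩
  · apply Differentiable.const_mul
    apply Differentiable.mul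
    · exact Differentiable.const_cpow (differentiable_id.add_const ν) (Or.inl two_pi_ne)
    apply Differentiable.mul
    · apply Differentiable.fun_finsetProd
      intro i _
      exact (differentiable_id.add_const ν).add_const _
    · exact Complex.differentiable_one_div_Gamma.comp
        ((differentiable_id.add_const ν).add_const _)
  · apply mul_ne_zero (by norm_num)
    apply mul_ne_zero
    · simp only [ne_eq, Complex.cpow_eq_zero_iff, not_and]
      intro hpi
      exact absurd hpi (by simpa using two_pi_ne)
    apply mul_ne_zero
    · rw [Finset.prod_ne_zero_iff]
      intro i hi
      rw [h]
      have : (i : ℂ) ≠ (n : ℂ) := by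
        exact_mod_cast Nat.cast_injective.ne (Finset.mem_range.mp hi).ne
      intro hc
      apply this
      linear_combination hc
    · rw [h, show -(n:ℂ) + (n+1) = 1 by ring, Complex.Gamma_one]
      norm_num
  · intro s
    rw [GammaC_inv, Gamma_inv_prod _ n, Finset.prod_range_succ]
    have : s + ν + n = s - z₀ := by linear_combination h
    rw [this]
    ring

/-! ### Factoring a product of functions at a point -/

lemma factor_prod {ι : Type*} (t : Finset ι) (f : ι → ℂ → ℂ) (z₀ : ℂ)
    (h : ∀ j ∈ t, ContinuousAt (f j) z₀ ∧
      (f j z₀ ≠ 0 ∨ ∃ H : ℂ → ℂ, ContinuousAt H z₀ ∧ H z₀ ≠ 0 ∧ ∀ s, f j s = (s - z₀) * H s)) :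
    ∃ V : ℂ → ℂ, ContinuousAt V z₀ ∧ V z₀ ≠ 0 ∧
      ∀ s, ∏ j ∈ t, f j s = (s - z₀) ^ (t.filter (fun j => f j z₀ = 0)).card * V s := by
  classical
  induction t using Finset.induction_on with
  | empty => exact ⟨fun _ => 1, continuousAt_const, one_ne_zero, by simp⟩
  | insert a t ha ih =>
    obtain ⟨V, hVc, hV0, hVeq⟩ := ih (fun j hj => h j (Finset.mem_insert_of_mem hj))
    obtain ⟨hfc, hcase⟩ := h a (Finset.mem_insert_self a t)
    rcases hcase with hne | ⟨H, hHc, hH0, hHeq⟩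
    · refine ⟨fun s => f a s * V s, hfc.mul hVc, mul_ne_zero hne hV0, fun s => ?_⟩
      rw [Finset.prod_insert ha, hVeq s, Finset.filter_insert, if_neg hne]
      ring
    · have hfz : f a z₀ = 0 := by rw [hHeq z₀]; ring
      refine ⟨fun s => H s * V s, hHc.mul hVc, mul_ne_zero hH0 hV0, fun s => ?_⟩
      rw [Finset.prod_insert ha, hVeq s, Finset.filter_insert, if_pos hfz, hHeq s,
        Finset.card_insert_of_notMem (fun hc => ha (Finset.mem_of_mem_filter a hc))]
      ring

lemma pow_factor_lt {P Q : ℂ → ℂ} {z₀ : ℂ} {a b : ℕ}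
    (hP : ContinuousAt P z₀) (hQ : ContinuousAt Q z₀) (hP0 : P z₀ ≠ 0)
    (hab : a < b) (h : ∀ s, (s - z₀) ^ a * P s = (s - z₀) ^ b * Q s) : False := by
  have key : ∀ s, s ≠ z₀ → P s = (s - z₀) ^ (b - a) * Q s := by
    intro s hs
    have hz : (s - z₀) ≠ 0 := sub_ne_zero.mpr hs
    have hpow : (s - z₀) ^ a ≠ 0 := pow_ne_zero _ hz
    apply mul_left_cancel₀ hpow
    rw [h s, ← mul_assoc, ← pow_add]
    congr 2
    omega
  have T2 : Filter.Tendsto (fun s => (s - z₀) ^ (b - a) * Q s) (nhdsWithin z₀ {z₀}ᶜ) (nhds 0) := by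
    have hc : ContinuousAt (fun s => (s - z₀) ^ (b - a) * Q s) z₀ :=
      (((continuous_id.sub continuous_const).pow _).continuousAt).mul hQ
    have hval : (z₀ - z₀) ^ (b - a) * Q z₀ = 0 := by
      rw [sub_self, zero_pow (by omega), zero_mul]
    have := hc.tendsto
    rw [hval] at this
    exact this.mono_left nhdsWithin_le_nhds
  have T1 : Filter.Tendsto P (nhdsWithin z₀ {z₀}ᶜ) (nhds (P z₀)) :=
    hP.tendsto.mono_left nhdsWithin_le_nhds
  have T1' : Filter.Tendsto P (nhdsWithin z₀ {z₀}ᶜ) (nhds 0) := by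
    apply T2.congr'
    filter_upwards [self_mem_nhdsWithin] with s hs
    exact (key s hs).symm
  exact hP0 (tendsto_nhds_unique T1 T1')

lemma pow_factor_eq {P Q : ℂ → ℂ} {z₀ : ℂ} {a b : ℕ}
    (hP : ContinuousAt P z₀) (hQ : ContinuousAt Q z₀) (hP0 : P z₀ ≠ 0) (hQ0 : Q z₀ ≠ 0)
    (h : ∀ s, (s - z₀) ^ a * P s = (s - z₀) ^ b * Q s) : a = b := by
  by_contra hne
  rcases Nat.lt_or_ge a b with hlt | hge
  · exact pow_factor_lt hP hQ hP0 hlt h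
  · exact pow_factor_lt hQ hP hQ0 (by omega) (fun s => (h s).symm)

/-! ### Counting functions and the combinatorial rigidity -/

def cntE {J : ℕ} (μ : Fin J → ℂ) (w : ℂ) : ℕ := (univ.filter (fun j => μ j = w)).card
def cntR {J : ℕ} (μ : Fin J → ℂ) (z : ℂ) : ℕ :=
  (univ.filter (fun j => ∃ n : ℕ, z + μ j = -(2 * (n : ℂ)))).card
def cntC {K : ℕ} (ν : Fin K → ℂ) (z : ℂ) : ℕ :=
  (univ.filter (fun k => ∃ n : ℕ, z + ν k = -(n : ℂ))).card

lemma split_mu {J : ℕ} (μ : Fin J → ℂ) (z : ℂ) :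
    cntR μ z = cntE μ (-z) + cntR μ (z + 2) := by
  rw [cntR, cntE, cntR, ← Finset.card_union_of_disjoint, ← Finset.filter_or]
  · congr 1
    apply Finset.filter_congr
    intro j _
    constructor
    · rintro ⟨n, hn⟩
      cases n with
      | zero => left; push_cast at hn; linear_combination hn
      | succ m => right; exact ⟨m, by push_cast at hn ⊢; linear_combination hn⟩
    · rintro (h | ⟨m, hm⟩)
      · exact ⟨0, by rw [h]; push_cast; ring⟩
      · exact ⟨m + 1, by push_cast at hm ⊢; linear_combination hm⟩
  · rw [Finset.disjoint_filter]
    rintro j _ hp ⟨n, hn⟩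
    rw [hp] at hn
    have h2 : ((2 + 2 * n : ℕ) : ℂ) = 0 := by push_cast; linear_combination hn
    rw [Nat.cast_eq_zero] at h2
    omega

lemma split_nu {K : ℕ} (ν : Fin K → ℂ) (z : ℂ) :
    cntC ν z = cntE ν (-z) + cntC ν (z + 1) := by
  rw [cntC, cntE, cntC, ← Finset.card_union_of_disjoint, ← Finset.filter_or]
  · congr 1
    apply Finset.filter_congr
    intro k _
    constructor
    · rintro ⟨n, hn⟩
      cases n with
      | zero => left; push_cast at hn; linear_combination hn
      | succ m => right; exact ⟨m, by push_cast at hn ⊢; linear_combination hn⟩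
    · rintro (h | ⟨m, hm⟩)
      · exact ⟨0, by rw [h]; push_cast; ring⟩
      · exact ⟨m + 1, by push_cast at hm ⊢; linear_combination hm⟩
  · rw [Finset.disjoint_filter]
    rintro k _ hp ⟨n, hn⟩
    rw [hp] at hn
    have h2 : ((1 + n : ℕ) : ℂ) = 0 := by push_cast; linear_combination hn
    rw [Nat.cast_eq_zero] at h2
    omega

lemma van_mu {J : ℕ} (μ : Fin J → ℂ) (hμ : ∀ j, (μ j).re = 0 ∨ (μ j).re = 1)
    (w : ℂ) (h0 : w.re ≠ 0) (h1 : w.re ≠ 1) : cntE μ w = 0 := by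
  rw [cntE, Finset.card_eq_zero, Finset.filter_eq_empty_iff]
  intro j _ hj
  rcases hμ j with h | h <;> rw [hj] at h <;> [exact h0 h; exact h1 h]

lemma van_nu {K : ℕ} (ν : Fin K → ℂ) (hν : ∀ k, ∃ n : ℕ, 1 ≤ n ∧ (ν k).re = n / 2)
    (w : ℂ) (h : ¬∃ n : ℕ, 1 ≤ n ∧ w.re = n / 2) : cntE ν w = 0 := by
  rw [cntE, Finset.card_eq_zero, Finset.filter_eq_empty_iff]
  intro k _ hk
  exact h (hk ▸ hν k)

lemma van_nu' {K : ℕ} (ν : Fin K → ℂ) (hν : ∀ k, ∃ n : ℕ, 1 ≤ n ∧ (ν k).re = n / 2)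
    (w : ℂ) (h : w.re < 1 / 2) : cntE ν w = 0 := by
  apply van_nu ν hν
  rintro ⟨n, hn1, hn2⟩
  rw [hn2] at h
  have : (1 : ℝ) ≤ n := by exact_mod_cast hn1
  linarith

lemma comb {J₁ J₂ K₁ K₂ : ℕ} (μ₁ : Fin J₁ → ℂ) (μ₂ : Fin J₂ → ℂ)
    (ν₁ : Fin K₁ → ℂ) (ν₂ : Fin K₂ → ℂ)
    (hμ₁ : ∀ j, (μ₁ j).re = 0 ∨ (μ₁ j).re = 1)
    (hμ₂ : ∀ j, (μ₂ j).re = 0 ∨ (μ₂ j).re = 1)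
    (hν₁ : ∀ k, ∃ n : ℕ, 1 ≤ n ∧ (ν₁ k).re = n / 2)
    (hν₂ : ∀ k, ∃ n : ℕ, 1 ≤ n ∧ (ν₂ k).re = n / 2)
    (hc : ∀ z : ℂ, cntR μ₁ z + cntC ν₁ z = cntR μ₂ z + cntC ν₂ z) :
    (∀ w : ℂ, cntE μ₁ w = cntE μ₂ w) ∧ (∀ w : ℂ, cntE ν₁ w = cntE ν₂ w) := by
  have M : ∀ w : ℂ, cntE μ₁ w + cntE ν₁ w + cntE ν₁ (w - 1)
      = cntE μ₂ w + cntE ν₂ w + cntE ν₂ (w - 1) := by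
    intro w
    have e1 := hc (-w)
    have e2 := hc (-w + 2)
    have s1 : ∀ {J : ℕ} (μ : Fin J → ℂ), cntR μ (-w) = cntE μ w + cntR μ (-w + 2) := by
      intro J μ
      simpa [neg_neg] using split_mu μ (-w)
    have s2 : ∀ {K : ℕ} (ν : Fin K → ℂ),
        cntC ν (-w) = cntE ν w + (cntE ν (w - 1) + cntC ν (-w + 2)) := by
      intro K ν
      have t1 := split_nu ν (-w)
      have t2 := split_nu ν (-w + 1)
      rw [show -(-w + 1) = w - 1 by ring, show -w + 1 + 1 = -w + 2 by ring] at t2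
      rw [neg_neg] at t1
      rw [t1, t2]
    rw [s1 μ₁, s1 μ₂, s2 ν₁, s2 ν₂] at e1
    omega
  have hA0 : ∀ w : ℂ, w.re = 0 → cntE μ₁ w = cntE μ₂ w := by
    intro w hw
    have hM := M w
    have hw1 : (w - 1).re = -1 := by simp [Complex.sub_re, hw]
    rw [van_nu' ν₁ hν₁ w (by rw [hw]; norm_num), van_nu' ν₂ hν₂ w (by rw [hw]; norm_num),
      van_nu' ν₁ hν₁ (w - 1) (by rw [hw1]; norm_num),
      van_nu' ν₂ hν₂ (w - 1) (by rw [hw1]; norm_num)] at hM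
    omega
  have hBhalf : ∀ w : ℂ, w.re = 1 / 2 → cntE ν₁ w = cntE ν₂ w := by
    intro w hw
    have hM := M w
    have hw1 : (w - 1).re = -(1 / 2) := by rw [Complex.sub_re, hw]; norm_num
    rw [van_mu μ₁ hμ₁ w (by rw [hw]; norm_num) (by rw [hw]; norm_num),
      van_mu μ₂ hμ₂ w (by rw [hw]; norm_num) (by rw [hw]; norm_num),
      van_nu' ν₁ hν₁ (w - 1) (by rw [hw1]; norm_num),
      van_nu' ν₂ hν₂ (w - 1) (by rw [hw1]; norm_num)] at hM
    omega
  have hre_add : ∀ (w : ℂ) (k : ℕ), (w + (k : ℂ)).re = w.re + k := by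
    intro w k
    simp [Complex.add_re]
  have hchain : ∀ w : ℂ, (1 / 2 : ℝ) ≤ w.re → cntE ν₁ w = cntE ν₂ w →
      ∀ k : ℕ, cntE ν₁ (w + (k : ℂ)) = cntE ν₂ (w + (k : ℂ)) := by
    intro w hw hbase k
    induction k with
    | zero => simpa using hbase
    | succ k ih =>
      have hM := M (w + ((k + 1 : ℕ) : ℂ))
      have hre : (w + ((k + 1 : ℕ) : ℂ)).re = w.re + (k + 1) := by
        rw [hre_add]; push_cast; ring
      have hk0 : (0 : ℝ) ≤ k := Nat.cast_nonneg k
      rw [van_mu μ₁ hμ₁ _ (by rw [hre]; intro hh; linarith) (by rw [hre]; intro hh; linarith),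
        van_mu μ₂ hμ₂ _ (by rw [hre]; intro hh; linarith) (by rw [hre]; intro hh; linarith),
        show w + ((k + 1 : ℕ) : ℂ) - 1 = w + (k : ℂ) by push_cast; ring] at hM
      omega
  have halt : ∀ w : ℂ, w.re = 1 → cntE ν₁ w = cntE ν₂ w ∧ cntE μ₁ w = cntE μ₂ w := by
    intro w hw
    have hd : ∀ k : ℕ, (cntE ν₁ (w + (k : ℂ)) : ℤ) - cntE ν₂ (w + (k : ℂ))
        = (-1) ^ k * ((cntE ν₁ w : ℤ) - cntE ν₂ w) := by
      intro k
      induction k with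
      | zero => simp
      | succ k ih =>
        have hM := M (w + ((k + 1 : ℕ) : ℂ))
        have hre : (w + ((k + 1 : ℕ) : ℂ)).re = 1 + (k + 1) := by
          rw [hre_add, hw]; push_cast; ring
        have hk0 : (0 : ℝ) ≤ k := Nat.cast_nonneg k
        rw [van_mu μ₁ hμ₁ _ (by rw [hre]; intro hh; linarith) (by rw [hre]; intro hh; linarith),
          van_mu μ₂ hμ₂ _ (by rw [hre]; intro hh; linarith) (by rw [hre]; intro hh; linarith),
          show w + ((k + 1 : ℕ) : ℂ) - 1 = w + (k : ℂ) by push_cast; ring] at hM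
        have hM' : (cntE ν₁ (w + ((k+1:ℕ) : ℂ)) : ℤ) + cntE ν₁ (w + (k : ℂ))
            = (cntE ν₂ (w + ((k+1:ℕ) : ℂ)) : ℤ) + cntE ν₂ (w + (k : ℂ)) := by
          have := hM; omega
        rw [pow_succ]
        linarith [ih, hM']
    obtain ⟨k, hk⟩ := exists_nat_gt ((∑ l : Fin K₁, |(ν₁ l).re|) + (∑ l : Fin K₂, |(ν₂ l).re|))
    have hs1 : (0 : ℝ) ≤ ∑ l : Fin K₁, |(ν₁ l).re| :=
      Finset.sum_nonneg fun _ _ => abs_nonneg _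
    have hs2 : (0 : ℝ) ≤ ∑ l : Fin K₂, |(ν₂ l).re| :=
      Finset.sum_nonneg fun _ _ => abs_nonneg _
    have h1 : cntE ν₁ (w + (k : ℂ)) = 0 := by
      rw [cntE, Finset.card_eq_zero, Finset.filter_eq_empty_iff]
      intro l _ hl
      have h2 : (ν₁ l).re = 1 + k := by rw [hl, hre_add, hw]
      have h3 : |(ν₁ l).re| ≤ ∑ l : Fin K₁, |(ν₁ l).re| :=
        Finset.single_le_sum (f := fun l => |(ν₁ l).re|) (fun _ _ => abs_nonneg _)
          (Finset.mem_univ l)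
      have h4 := le_abs_self (ν₁ l).re
      linarith
    have h2 : cntE ν₂ (w + (k : ℂ)) = 0 := by
      rw [cntE, Finset.card_eq_zero, Finset.filter_eq_empty_iff]
      intro l _ hl
      have h2 : (ν₂ l).re = 1 + k := by rw [hl, hre_add, hw]
      have h3 : |(ν₂ l).re| ≤ ∑ l : Fin K₂, |(ν₂ l).re| :=
        Finset.single_le_sum (f := fun l => |(ν₂ l).re|) (fun _ _ => abs_nonneg _)
          (Finset.mem_univ l)
      have h4 := le_abs_self (ν₂ l).re
      linarith
    have hd0 : cntE ν₁ w = cntE ν₂ w := by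
      have := hd k
      rw [h1, h2] at this
      simp only [Nat.cast_zero, sub_self] at this
      have hne : ((-1 : ℤ)) ^ k ≠ 0 := pow_ne_zero _ (by norm_num)
      have := (mul_eq_zero.mp this.symm).resolve_left hne
      omega
    refine ⟨hd0, ?_⟩
    have hM := M w
    have hw1 : (w - 1).re = 0 := by rw [Complex.sub_re, hw]; norm_num
    rw [van_nu' ν₁ hν₁ (w - 1) (by rw [hw1]; norm_num),
      van_nu' ν₂ hν₂ (w - 1) (by rw [hw1]; norm_num)] at hM
    omega
  constructor
  · intro w
    by_cases h0 : w.re = 0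
    · exact hA0 w h0
    by_cases h1 : w.re = 1
    · exact (halt w h1).2
    rw [van_mu μ₁ hμ₁ w h0 h1, van_mu μ₂ hμ₂ w h0 h1]
  · intro w
    by_cases hex : ∃ n : ℕ, 1 ≤ n ∧ w.re = n / 2
    · obtain ⟨n, hn1, hn2⟩ := hex
      rcases Nat.even_or_odd n with ⟨m, hm⟩ | ⟨m, hm⟩
      · have hm1 : 1 ≤ m := by omega
        have hwm : w.re = m := by rw [hn2, hm]; push_cast; ring
        set v := w - ((m - 1 : ℕ) : ℂ) with hv
        have hvre : v.re = 1 := by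
          rw [hv, Complex.sub_re, hwm]
          have : ((m - 1 : ℕ) : ℂ).re = (m : ℝ) - 1 := by
            rw [Nat.cast_sub hm1]; push_cast; simp [Complex.sub_re]
          rw [this]; ring
        have hbase := (halt v hvre).1
        have := hchain v (by rw [hvre]; norm_num) hbase (m - 1)
        rw [show v + ((m - 1 : ℕ) : ℂ) = w by rw [hv]; ring] at this
        exact this
      · have hwm : w.re = m + 1 / 2 := by
          rw [hn2, hm]; push_cast; ring
        set v := w - (m : ℂ) with hv
        have hvre : v.re = 1 / 2 := by
          rw [hv, Complex.sub_re, hwm]; simp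
        have hbase := hBhalf v hvre
        have := hchain v (by rw [hvre]) hbase m
        rw [show v + (m : ℂ) = w by rw [hv]; ring] at this
        exact this
    · rw [van_nu ν₁ hν₁ w hex, van_nu ν₂ hν₂ w hex]

/-! ### Multiset translations -/

lemma cntE_count {J : ℕ} (μ : Fin J → ℂ) (w : ℂ) :
    Multiset.count w (↑(List.ofFn μ) : Multiset ℂ) = cntE μ w := by
  rw [← Fin.univ_val_map, Multiset.count_map, cntE]
  have : (Multiset.filter (fun j => w = μ j) Finset.univ.val)
      = Multiset.filter (fun j => μ j = w) Finset.univ.val :=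
    Multiset.filter_congr (fun x _ => eq_comm)
  rw [Finset.card_filter]
  rw [this]
  simp [Finset.filter, Multiset.countP_eq_card_filter]

lemma prod_ofFn {J : ℕ} (μ : Fin J → ℂ) (f : ℂ → ℂ) :
    (∏ j, f (μ j)) = ((↑(List.ofFn μ) : Multiset ℂ).map f).prod := by
  rw [← Fin.univ_val_map, Multiset.map_map, Finset.prod_eq_multiset_prod]
  rfl

/-- **Rigidity of Γ-factors.** Suppose `Re(μ_{j,i}) ∈ {0,1}` and each `Re(ν_{k,i})` is a
positive integer or half-integer, and the quotient
`G(s) = [∏_j Γ_ℝ(s+μ_{j,1}) ∏_k Γ_ℂ(s+ν_{k,1})] / [∏_j Γ_ℝ(s+μ_{j,2}) ∏_k Γ_ℂ(s+ν_{k,2})]`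
extends to an entire function `g` with no zeros (the extension agrees with the quotient
wherever numerator and denominator are both free of Γ-poles, i.e. nonzero).  Then
`J₁ = J₂`, `K₁ = K₂`, the multisets of `μ`'s and of `ν`'s agree, and `g ≡ 1`. -/
theorem gamma_factor_rigidity
    (J₁ J₂ K₁ K₂ : ℕ) (μ₁ : Fin J₁ → ℂ) (μ₂ : Fin J₂ → ℂ)
    (ν₁ : Fin K₁ → ℂ) (ν₂ : Fin K₂ → ℂ)
    (hμ₁ : ∀ j, (μ₁ j).re = 0 ∨ (μ₁ j).re = 1)
    (hμ₂ : ∀ j, (μ₂ j).re = 0 ∨ (μ₂ j).re = 1)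
    (hν₁ : ∀ k, ∃ n : ℕ, 1 ≤ n ∧ (ν₁ k).re = n / 2)
    (hν₂ : ∀ k, ∃ n : ℕ, 1 ≤ n ∧ (ν₂ k).re = n / 2)
    (g : ℂ → ℂ) (hg : Differentiable ℂ g) (hgne : ∀ s, g s ≠ 0)
    (hext : ∀ s : ℂ,
      (∏ j, GammaR (s + μ₁ j)) * (∏ k, GammaC (s + ν₁ k)) ≠ 0 →
      (∏ j, GammaR (s + μ₂ j)) * (∏ k, GammaC (s + ν₂ k)) ≠ 0 →
      g s = ((∏ j, GammaR (s + μ₁ j)) * (∏ k, GammaC (s + ν₁ k)))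
          / ((∏ j, GammaR (s + μ₂ j)) * (∏ k, GammaC (s + ν₂ k)))) :
    J₁ = J₂ ∧ K₁ = K₂ ∧
    (↑(List.ofFn μ₁) : Multiset ℂ) = ↑(List.ofFn μ₂) ∧
    (↑(List.ofFn ν₁) : Multiset ℂ) = ↑(List.ofFn ν₂) ∧
    ∀ s : ℂ, g s = 1 := by
  classical
  set E₁ : ℂ → ℂ :=
    fun s => (∏ j, (GammaR (s + μ₁ j))⁻¹) * (∏ k, (GammaC (s + ν₁ k))⁻¹) with hE₁def
  set E₂ : ℂ → ℂ :=
    fun s => (∏ j, (GammaR (s + μ₂ j))⁻¹) * (∏ k, (GammaC (s + ν₂ k))⁻¹) with hE₂def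
  have hE₁N : ∀ s, E₁ s = ((∏ j, GammaR (s + μ₁ j)) * (∏ k, GammaC (s + ν₁ k)))⁻¹ := by
    intro s
    rw [mul_inv, ← Finset.prod_inv_distrib, ← Finset.prod_inv_distrib]
  have hE₂N : ∀ s, E₂ s = ((∏ j, GammaR (s + μ₂ j)) * (∏ k, GammaC (s + ν₂ k)))⁻¹ := by
    intro s
    rw [mul_inv, ← Finset.prod_inv_distrib, ← Finset.prod_inv_distrib]
  have hE₁diff : Differentiable ℂ E₁ :=
    (Differentiable.fun_finsetProd fun j _ => diff_GammaR_inv (μ₁ j)).mul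
      (Differentiable.fun_finsetProd fun k _ => diff_GammaC_inv (ν₁ k))
  have hE₂diff : Differentiable ℂ E₂ :=
    (Differentiable.fun_finsetProd fun j _ => diff_GammaR_inv (μ₂ j)).mul
      (Differentiable.fun_finsetProd fun k _ => diff_GammaC_inv (ν₂ k))
  -- the countable "bad" set
  set T : Set ℂ :=
    ((⋃ (j : Fin J₁), ⋃ (n : ℕ), {-(μ₁ j) - 2*(n : ℂ)}) ∪
      (⋃ (k : Fin K₁), ⋃ (n : ℕ), {-(ν₁ k) - (n : ℂ)})) ∪
    ((⋃ (j : Fin J₂), ⋃ (n : ℕ), {-(μ₂ j) - 2*(n : ℂ)}) ∪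
      (⋃ (k : Fin K₂), ⋃ (n : ℕ), {-(ν₂ k) - (n : ℂ)})) with hTdef
  have hTc : T.Countable := by
    refine Set.Countable.union (Set.Countable.union ?_ ?_) (Set.Countable.union ?_ ?_) <;>
      exact Set.countable_iUnion fun _ =>
        Set.countable_iUnion fun _ => Set.countable_singleton _
  have hdense : Dense Tᶜ := hTc.dense_compl ℂ
  have hsub : ∀ s ∉ T, E₁ s ≠ 0 ∧ E₂ s ≠ 0 := by
    intro s hs
    constructor
    · apply mul_ne_zero <;> rw [Finset.prod_ne_zero_iff] <;> intro i _ <;>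
        apply inv_ne_zero <;> intro hzero
      · obtain ⟨n, hn⟩ := (GammaR_eq_zero_iff _).mp hzero
        apply hs
        rw [hTdef]
        refine Or.inl (Or.inl ?_)
        simp only [Set.mem_iUnion, Set.mem_singleton_iff]
        exact ⟨i, n, by linear_combination hn⟩
      · obtain ⟨n, hn⟩ := (GammaC_eq_zero_iff _).mp hzero
        apply hs
        rw [hTdef]
        refine Or.inl (Or.inr ?_)
        simp only [Set.mem_iUnion, Set.mem_singleton_iff]
        exact ⟨i, n, by linear_combination hn⟩
    · apply mul_ne_zero <;> rw [Finset.prod_ne_zero_iff] <;> intro i _ <;>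
        apply inv_ne_zero <;> intro hzero
      · obtain ⟨n, hn⟩ := (GammaR_eq_zero_iff _).mp hzero
        apply hs
        rw [hTdef]
        refine Or.inr (Or.inl ?_)
        simp only [Set.mem_iUnion, Set.mem_singleton_iff]
        exact ⟨i, n, by linear_combination hn⟩
      · obtain ⟨n, hn⟩ := (GammaC_eq_zero_iff _).mp hzero
        apply hs
        rw [hTdef]
        refine Or.inr (Or.inr ?_)
        simp only [Set.mem_iUnion, Set.mem_singleton_iff]
        exact ⟨i, n, by linear_combination hn⟩
  -- the global identity g * E₁ = E₂
  have hkey : ∀ s, g s * E₁ s = E₂ s := by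
    have hfun : (fun s => g s * E₁ s) = E₂ := by
      apply Continuous.ext_on hdense (hg.continuous.mul hE₁diff.continuous) hE₂diff.continuous
      intro s hs
      obtain ⟨h1, h2⟩ := hsub s hs
      have hN1 : (∏ j, GammaR (s + μ₁ j)) * (∏ k, GammaC (s + ν₁ k)) ≠ 0 := by
        intro hc
        apply h1
        rw [hE₁N, hc, inv_zero]
      have hN2 : (∏ j, GammaR (s + μ₂ j)) * (∏ k, GammaC (s + ν₂ k)) ≠ 0 := by
        intro hc
        apply h2
        rw [hE₂N, hc, inv_zero]
      have hgval := hext s hN1 hN2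
      show g s * E₁ s = E₂ s
      rw [hE₁N s, hE₂N s, hgval]
      rw [div_mul_eq_mul_div, mul_inv_cancel₀ hN1, one_div]
    exact fun s => congrFun hfun s
  -- equality of pole-counting functions
  have hcnt : ∀ z : ℂ, cntR μ₁ z + cntC ν₁ z = cntR μ₂ z + cntC ν₂ z := by
    intro z₀
    have hypR : ∀ {J : ℕ} (μ : Fin J → ℂ), ∀ j ∈ (univ : Finset (Fin J)),
        ContinuousAt (fun s => (GammaR (s + μ j))⁻¹) z₀ ∧
        ((fun s => (GammaR (s + μ j))⁻¹) z₀ ≠ 0 ∨ ∃ H : ℂ → ℂ, ContinuousAt H z₀ ∧ H z₀ ≠ 0 ∧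
          ∀ s, (fun s => (GammaR (s + μ j))⁻¹) s = (s - z₀) * H s) := by
      intro J μ j _
      refine ⟨(diff_GammaR_inv (μ j)).continuous.continuousAt, ?_⟩
      by_cases hz : ∃ n : ℕ, z₀ + μ j = -(2 * (n : ℂ))
      · obtain ⟨n, hn⟩ := hz
        obtain ⟨H, hHd, hH0, hHeq⟩ := GRinv_factor (μ j) z₀ n hn
        exact Or.inr ⟨H, hHd.continuous.continuousAt, hH0, hHeq⟩
      · exact Or.inl (inv_ne_zero (fun hc => hz ((GammaR_eq_zero_iff _).mp hc)))
    have hypC : ∀ {K : ℕ} (ν : Fin K → ℂ), ∀ k ∈ (univ : Finset (Fin K)),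
        ContinuousAt (fun s => (GammaC (s + ν k))⁻¹) z₀ ∧
        ((fun s => (GammaC (s + ν k))⁻¹) z₀ ≠ 0 ∨ ∃ H : ℂ → ℂ, ContinuousAt H z₀ ∧ H z₀ ≠ 0 ∧
          ∀ s, (fun s => (GammaC (s + ν k))⁻¹) s = (s - z₀) * H s) := by
      intro K ν k _
      refine ⟨(diff_GammaC_inv (ν k)).continuous.continuousAt, ?_⟩
      by_cases hz : ∃ n : ℕ, z₀ + ν k = -(n : ℂ)
      · obtain ⟨n, hn⟩ := hz
        obtain ⟨H, hHd, hH0, hHeq⟩ := GCinv_factor (ν k) z₀ n hn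
        exact Or.inr ⟨H, hHd.continuous.continuousAt, hH0, hHeq⟩
      · exact Or.inl (inv_ne_zero (fun hc => hz ((GammaC_eq_zero_iff _).mp hc)))
    obtain ⟨VR₁, hVR₁c, hVR₁0, hVR₁⟩ :=
      factor_prod univ (fun j s => (GammaR (s + μ₁ j))⁻¹) z₀ (hypR μ₁)
    obtain ⟨VC₁, hVC₁c, hVC₁0, hVC₁⟩ :=
      factor_prod univ (fun k s => (GammaC (s + ν₁ k))⁻¹) z₀ (hypC ν₁)
    obtain ⟨VR₂, hVR₂c, hVR₂0, hVR₂⟩ :=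
      factor_prod univ (fun j s => (GammaR (s + μ₂ j))⁻¹) z₀ (hypR μ₂)
    obtain ⟨VC₂, hVC₂c, hVC₂0, hVC₂⟩ :=
      factor_prod univ (fun k s => (GammaC (s + ν₂ k))⁻¹) z₀ (hypC ν₂)
    have cardR : ∀ {J : ℕ} (μ : Fin J → ℂ),
        ((univ : Finset (Fin J)).filter
          (fun j => (fun s => (GammaR (s + μ j))⁻¹) z₀ = 0)).card = cntR μ z₀ := by
      intro J μ
      rw [cntR]
      congr 1
      apply Finset.filter_congr
      intro j _
      simp only [inv_eq_zero, GammaR_eq_zero_iff]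
    have cardC : ∀ {K : ℕ} (ν : Fin K → ℂ),
        ((univ : Finset (Fin K)).filter
          (fun k => (fun s => (GammaC (s + ν k))⁻¹) z₀ = 0)).card = cntC ν z₀ := by
      intro K ν
      rw [cntC]
      congr 1
      apply Finset.filter_congr
      intro k _
      simp only [inv_eq_zero, GammaC_eq_zero_iff]
    rw [cardR μ₁] at hVR₁
    rw [cardR μ₂] at hVR₂
    rw [cardC ν₁] at hVC₁
    rw [cardC ν₂] at hVC₂
    apply pow_factor_eq (z₀ := z₀)
      (P := fun s => g s * (VR₁ s * VC₁ s)) (Q := fun s => VR₂ s * VC₂ s)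
      ((hg.continuous.continuousAt).mul (hVR₁c.mul hVC₁c)) (hVR₂c.mul hVC₂c)
      (mul_ne_zero (hgne z₀) (mul_ne_zero hVR₁0 hVC₁0)) (mul_ne_zero hVR₂0 hVC₂0)
    intro s
    have h1 : g s * E₁ s = E₂ s := hkey s
    rw [hE₁def, hE₂def] at h1
    simp only at h1
    rw [hVR₁ s, hVC₁ s, hVR₂ s, hVC₂ s] at h1
    rw [pow_add]
    calc (s - z₀) ^ cntR μ₁ z₀ * (s - z₀) ^ cntC ν₁ z₀ * (g s * (VR₁ s * VC₁ s))
        = g s * ((s - z₀) ^ cntR μ₁ z₀ * VR₁ s * ((s - z₀) ^ cntC ν₁ z₀ * VC₁ s)) := by ring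
      _ = (s - z₀) ^ cntR μ₂ z₀ * VR₂ s * ((s - z₀) ^ cntC ν₂ z₀ * VC₂ s) := h1
      _ = (s - z₀) ^ (cntR μ₂ z₀ + cntC ν₂ z₀) * (VR₂ s * VC₂ s) := by rw [pow_add]; ring
  -- combinatorial rigidity
  obtain ⟨hAeq, hBeq⟩ := comb μ₁ μ₂ ν₁ ν₂ hμ₁ hμ₂ hν₁ hν₂ hcnt
  have hMμ : (↑(List.ofFn μ₁) : Multiset ℂ) = ↑(List.ofFn μ₂) := by
    apply Multiset.ext.mpr
    intro w
    rw [cntE_count, cntE_count]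
    exact hAeq w
  have hMν : (↑(List.ofFn ν₁) : Multiset ℂ) = ↑(List.ofFn ν₂) := by
    apply Multiset.ext.mpr
    intro w
    rw [cntE_count, cntE_count]
    exact hBeq w
  have hJ : J₁ = J₂ := by
    have := congrArg Multiset.card hMμ
    simpa using this
  have hK : K₁ = K₂ := by
    have := congrArg Multiset.card hMν
    simpa using this
  -- E₁ = E₂
  have hE12 : ∀ s, E₁ s = E₂ s := by
    intro s
    rw [hE₁def, hE₂def]
    simp only
    rw [prod_ofFn μ₁ (fun t => (GammaR (s + t))⁻¹), prod_ofFn μ₂ (fun t => (GammaR (s + t))⁻¹),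
      prod_ofFn ν₁ (fun t => (GammaC (s + t))⁻¹), prod_ofFn ν₂ (fun t => (GammaC (s + t))⁻¹),
      hMμ, hMν]
  refine ⟨hJ, hK, hMμ, hMν, ?_⟩
  have hgone : g = fun _ => (1 : ℂ) := by
    apply Continuous.ext_on hdense hg.continuous continuous_const
    intro s hs
    obtain ⟨h1, _⟩ := hsub s hs
    have := hkey s
    rw [hE12 s] at this
    have h2 := hsub s hs
    exact mul_right_cancel₀ h2.2 (by rw [this, one_mul])
  exact fun s => congrFun hgone s

end
end
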